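/- Let m ≥ 1 and k ≥ 1 be integers, write 2m = q·k + r with 0 ≤ r < k, and let ζ ∈ ℂ be a primitive 2k-th root of unity. Let J be the 2m×2m complex matrix with entries J_{ij} = (−1)^i if i + j = 2m − 1 and J_{ij} = 0 otherwise (indices 0 ≤ i, j ≤ 2m−1), let sp(J) = { X ∈ M_{2m}(ℂ) : Xᵗ·J + J·X = 0 }, and let D be the diagonal matrix with entries D_{ii} = ζ^{2m−1−2i} (integer powers) for i = 0, …, 2m−1. Then 2 · dim { X ∈ sp(J) : D·X = X·D } = 2m·q + (q+1)·r + e, where e = 2·⌊(q+1)/2⌋ if k is odd and e = 0 if k is even. -/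

import Mathlib

open Finset Matrix

private lemma np_congr {x y : ℕ} (h : x % 2 = y % 2) : (-1:ℂ)^x = (-1)^y := by
  conv_lhs => rw [← Nat.div_add_mod x 2]
  conv_rhs => rw [← Nat.div_add_mod y 2]
  rw [pow_add, pow_add, pow_mul, pow_mul, h]
  norm_num

private lemma solve1 (u v : ℕ) (x y : ℂ) (h : x * (-1)^u + (-1)^v * y = 0) :
    y = (-1)^(u+v+1) * x := by
  have h2 : (-1:ℂ)^v * ((-1)^v * y) = (-1)^v * (-(x * (-1)^u)) := by
    rw [eq_neg_of_add_eq_zero_right h]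
  rw [← mul_assoc, ← pow_add,
    np_congr (show (v+v)%2 = 0%2 by omega), pow_zero, one_mul] at h2
  rw [h2, pow_add, pow_add]; ring

private lemma coefz (u v : ℕ) (x : ℂ) :
    ((-1:ℂ)^(u+v+1) * x) * (-1)^u + (-1)^v * x = 0 := by
  have h : (-1:ℂ)^(u+v+1) * (-1)^u = -(-1)^v := by
    rw [← pow_add, np_congr (show (u+v+1+u)%2 = (v+1)%2 by omega), pow_succ]
    ring
  calc ((-1:ℂ)^(u+v+1) * x) * (-1)^u + (-1)^v * x
      = ((-1:ℂ)^(u+v+1) * (-1)^u) * x + (-1)^v * x := by ring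
  _ = 0 := by rw [h]; ring

private lemma count_resid (q r c k : ℕ) (hk : 0 < k) (hc : c < k) (hrk : r ≤ k) :
    ((Finset.range (q*k+r)).filter (fun x => x % k = c)).card
      = q + if c < r then 1 else 0 := by
  have himg : ((Finset.range (q*k+r)).filter (fun x => x % k = c))
      = (Finset.range (q + if c < r then 1 else 0)).image (fun t => t*k + c) := by
    ext x
    simp only [mem_filter, mem_range, mem_image]
    constructor
    · rintro ⟨hx, hmod⟩
      have hdm : k * (x/k) + x % k = x := Nat.div_add_mod x k
      have hdm' : x/k*k = k*(x/k) := Nat.mul_comm _ _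
      refine ⟨x / k, ?_, by omega⟩
      by_cases hcr : c < r
      · rw [if_pos hcr]
        by_contra h
        have h2 : q*k + k ≤ k*(x/k) := by
          calc q*k + k = k*(q+1) := by ring
          _ ≤ k*(x/k) := Nat.mul_le_mul_left k (by omega)
        omega
      · rw [if_neg hcr]
        by_contra h
        have h2 : q*k ≤ k*(x/k) := by
          calc q*k = k*q := by ring
          _ ≤ k*(x/k) := Nat.mul_le_mul_left k (by omega)
        omega
    · rintro ⟨t, ht, rfl⟩
      have hmod : (t*k + c) % k = c := by
        rw [Nat.add_comm, Nat.add_mul_mod_self_right]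
        exact Nat.mod_eq_of_lt hc
      refine ⟨?_, hmod⟩
      by_cases hcr : c < r
      · rw [if_pos hcr] at ht
        have : t*k ≤ q*k := Nat.mul_le_mul_right k (by omega)
        omega
      · rw [if_neg hcr] at ht
        have h2 : (t+1)*k ≤ q*k := Nat.mul_le_mul_right k (by omega)
        have h3 : (t+1)*k = t*k + k := by ring
        omega
  rw [himg, Finset.card_image_of_injective _ (fun a b hab =>
    Nat.eq_of_mul_eq_mul_right hk (by omega)), Finset.card_range]

private lemma count_lt (q r k : ℕ) (hk : 0 < k) (hrk : r ≤ k) :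
    ((Finset.range (q*k+r)).filter (fun x => x % k < r)).card = (q+1)*r := by
  rw [Finset.card_eq_sum_card_fiberwise (f := fun x => x % k) (t := Finset.range r)
    (fun x hx => by simp only [mem_coe, mem_filter] at hx; simp [hx.2])]
  have heq : ∀ c ∈ Finset.range r,
      (((Finset.range (q*k+r)).filter (fun x => x % k < r)).filter
        (fun a => a % k = c)).card = q + 1 := by
    intro c hc
    rw [Finset.mem_range] at hc
    rw [Finset.filter_filter]
    have h2 : ((Finset.range (q*k+r)).filter (fun x => x % k < r ∧ x % k = c))
        = ((Finset.range (q*k+r)).filter (fun x => x % k = c)) := by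
      apply Finset.filter_congr
      intro x _
      constructor
      · exact fun h => h.2
      · exact fun h => ⟨by omega, h⟩
    rw [h2, count_resid q r c k hk (by omega) hrk, if_pos hc]
  rw [Finset.sum_congr rfl heq]
  simp [Finset.sum_const, mul_comm]

private lemma finfilter_card {n : ℕ} (P : ℕ → Prop) [DecidablePred P] :
    ((Finset.univ : Finset (Fin n)).filter (fun i => P i.val)).card
      = ((Finset.range n).filter P).card := by
  rw [Finset.card_filter, Finset.card_filter]
  exact Fin.sum_univ_eq_sum_range (fun i => if P i then 1 else 0) n

private lemma cardA (n k q r : ℕ) (hk : 0 < k) (hdiv : n = q*k+r) (hr : r < k) :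
    ((Finset.univ : Finset (Fin n × Fin n)).filter
      (fun p => p.1.val % k = p.2.val % k)).card = n*q + (q+1)*r := by
  rw [Finset.card_filter, ← Finset.univ_product_univ, Finset.sum_product]
  have hinner : ∀ a : Fin n,
      (∑ b : Fin n, if a.val % k = b.val % k then 1 else 0)
        = q + if a.val % k < r then 1 else 0 := by
    intro a
    rw [← Finset.card_filter]
    rw [finfilter_card (fun x => a.val % k = x % k)]
    have h1 : ((Finset.range n).filter (fun x => a.val % k = x % k))
        = ((Finset.range n).filter (fun x => x % k = a.val % k)) := by
      apply Finset.filter_congr; intro x _; exact eq_comm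
    have h2 := count_resid q r (a.val % k) k hk (Nat.mod_lt _ hk) (le_of_lt hr)
    rw [← hdiv] at h2
    rw [h1, h2]
  rw [Finset.sum_congr rfl (fun a _ => hinner a), Finset.sum_add_distrib,
    Finset.sum_const, Finset.card_univ, Fintype.card_fin, ← Finset.card_filter,
    finfilter_card (fun x => x % k < r)]
  have h3 := count_lt q r k hk (le_of_lt hr)
  rw [← hdiv] at h3
  rw [h3]
  simp [smul_eq_mul]

private lemma cardFix (n k q r : ℕ) (hk : 0 < k) (hdiv : n = q*k+r) (hr : r < k)
    (hn2 : n % 2 = 0) (hn0 : 0 < n) :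
    ((Finset.univ : Finset (Fin n × Fin n)).filter
      (fun p => p.1.val % k = p.2.val % k ∧ p.1.val + p.2.val = n - 1)).card
      = if Odd k then 2*((q+1)/2) else 0 := by
  by_cases hko : Odd k
  · rw [if_pos hko]
    have hk2 : k % 2 = 1 := Nat.odd_iff.1 hko
    set i₀ := if r % 2 = 1 then (r-1)/2 else (k+r-1)/2 with hi₀
    have hi0k : i₀ < k := by rw [hi₀]; split <;> omega
    have h2i0 : (2*i₀) % k = (n-1) % k := by
      rcases Nat.eq_zero_or_pos r with hr0 | hrpos
      · subst hr0
        have hq : 1 ≤ q := by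
          by_contra h
          interval_cases q <;> omega
        obtain ⟨q', rfl⟩ : ∃ q', q = q'+1 := ⟨q-1, by omega⟩
        have hexp : (q'+1)*k = k*q' + k := by ring
        have hi0v : i₀ = (k-1)/2 := by rw [hi₀]; norm_num
        rw [show n - 1 = k*q' + (k-1) by omega, Nat.mul_add_mod]
        rw [show 2*i₀ = k-1 by rw [hi0v]; omega]
      · have h1 : n - 1 = k*q + (r-1) := by
          have : q*k = k*q := Nat.mul_comm q k
          omega
        rw [h1, Nat.mul_add_mod]
        rcases (show r % 2 = 1 ∨ r % 2 = 0 by omega) with ho|he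
        · rw [show 2*i₀ = r-1 by rw [hi₀, if_pos ho]; omega]
        · rw [show 2*i₀ = k + (r-1) by rw [hi₀, if_neg (by omega)]; omega,
            Nat.add_mod_left]
    have hco : Nat.gcd k 2 = 1 := Nat.coprime_two_right.2 hko
    have hkey : ∀ a b : Fin n, a.val + b.val = n - 1 →
        (a.val % k = b.val % k ↔ a.val % k = i₀) := by
      intro a b hab
      constructor
      · intro h
        have h1 : Nat.ModEq k (2*a.val) (2*i₀) := by
          calc (2*a.val) = a.val + a.val := by ring
          _ ≡ a.val + b.val [MOD k] := Nat.ModEq.add_left _ h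
          _ = n - 1 := hab
          _ ≡ 2*i₀ [MOD k] := (h2i0 : Nat.ModEq k (2*i₀) (n-1)).symm
        have h2 : Nat.ModEq k a.val i₀ :=
          Nat.ModEq.cancel_left_of_coprime hco h1
        rw [(h2 : a.val % k = i₀ % k), Nat.mod_eq_of_lt hi0k]
      · intro h
        have h1 : Nat.ModEq k a.val i₀ := by
          rw [Nat.ModEq, h, Nat.mod_eq_of_lt hi0k]
        have h2 : Nat.ModEq k (a.val + a.val) (a.val + b.val) := by
          calc a.val + a.val = 2*a.val := by ring
          _ ≡ 2*i₀ [MOD k] := Nat.ModEq.mul_left 2 h1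
          _ ≡ n-1 [MOD k] := (h2i0 : Nat.ModEq k (2*i₀) (n-1))
          _ = a.val + b.val := hab.symm
        exact Nat.ModEq.add_left_cancel' _ h2
    have hbij : ((Finset.univ : Finset (Fin n × Fin n)).filter
        (fun p => p.1.val % k = p.2.val % k ∧ p.1.val + p.2.val = n - 1)).card
        = ((Finset.univ : Finset (Fin n)).filter (fun a => a.val % k = i₀)).card := by
      refine Finset.card_bij' (fun p _ => p.1) (fun a _ => (a, Fin.rev a)) ?_ ?_ ?_ ?_
      · rintro ⟨a, b⟩ hp
        simp only [mem_filter, mem_univ, true_and] at hp ⊢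
        exact (hkey a b hp.2).1 hp.1
      · intro a ha
        simp only [mem_filter, mem_univ, true_and] at ha ⊢
        have hlt := a.isLt
        have hrv : (Fin.rev a).val = n - (a.val + 1) := Fin.val_rev a
        have hsum : a.val + (Fin.rev a).val = n - 1 := by omega
        exact ⟨(hkey a (Fin.rev a) hsum).2 ha, hsum⟩
      · rintro ⟨a, b⟩ hp
        simp only [mem_filter, mem_univ, true_and] at hp
        have hlt := a.isLt
        have hltb := b.isLt
        have hab : Fin.rev a = b := by
          rw [Fin.ext_iff, Fin.val_rev]
          omega
        show (a, Fin.rev a) = (a, b)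
        rw [hab]
      · intro a ha
        rfl
    rw [hbij, finfilter_card (fun x => x % k = i₀), hdiv,
      count_resid q r i₀ k hk hi0k (le_of_lt hr)]
    have hqk2 : (q*k) % 2 = q % 2 := by
      have h := Nat.mul_mod q k 2
      rw [hk2, mul_one] at h
      omega
    have hlt : (i₀ < r) ↔ r % 2 = 1 := by
      rw [hi₀]; split <;> omega
    rcases (show r % 2 = 1 ∨ r % 2 = 0 by omega) with ho|he
    · rw [if_pos (hlt.2 ho)]; omega
    · rw [if_neg (fun hc => by omega)]; omega
  · rw [if_neg hko]
    rw [Finset.card_eq_zero, Finset.filter_eq_empty_iff]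
    rintro ⟨a, b⟩ -
    simp only [not_and]
    intro hmod hsum
    have h2k : 2 ∣ k := by
      rcases Nat.even_or_odd k with h|h
      · exact h.two_dvd
      · exact absurd h hko
    have h2 : a.val % 2 = b.val % 2 := Nat.ModEq.of_dvd h2k (hmod : Nat.ModEq k _ _)
    have hlt := a.isLt
    have hltb := b.isLt
    omega

private theorem main_aux (n k q r : ℕ) (hn2 : n % 2 = 0) (hn0 : 0 < n) (hk0 : 0 < k)
    (hdiv : n = q * k + r) (hr : r < k) (ζ : ℂ) (hζ : IsPrimitiveRoot ζ (2 * k))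
    (J D : Matrix (Fin n) (Fin n) ℂ)
    (hJ : J = fun i j : Fin n =>
      if (i : ℕ) + (j : ℕ) = n - 1 then (-1 : ℂ) ^ (i : ℕ) else 0)
    (hD : D = Matrix.diagonal fun i : Fin n => ζ ^ ((n : ℤ) - 1 - 2 * (i : ℤ))) :
    2 * Module.finrank ℂ
        ↥(LinearMap.ker
            (LinearMap.mulRight ℂ J ∘ₗ
              (Matrix.transposeLinearEquiv (Fin n) (Fin n) ℂ ℂ).toLinearMap
              + LinearMap.mulLeft ℂ J)
          ⊓ LinearMap.ker (LinearMap.mulLeft ℂ D - LinearMap.mulRight ℂ D))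
      = n * q + (q + 1) * r + (if Odd k then 2 * ((q + 1) / 2) else 0) := by
  classical
  have hζ0 : ζ ≠ 0 := hζ.ne_zero (by omega)
  set V := (LinearMap.ker
            (LinearMap.mulRight ℂ J ∘ₗ
              (Matrix.transposeLinearEquiv (Fin n) (Fin n) ℂ ℂ).toLinearMap
              + LinearMap.mulLeft ℂ J)
          ⊓ LinearMap.ker (LinearMap.mulLeft ℂ D - LinearMap.mulRight ℂ D)) with hV
  have hJe : ∀ i j : Fin n, J i j =
      if (i : ℕ) + (j : ℕ) = n - 1 then (-1 : ℂ) ^ (i : ℕ) else 0 := by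
    intro i j; rw [hJ]
  -- the sign function
  set eps : Fin n → Fin n → ℂ := fun a b => (-1 : ℂ) ^ ((a : ℕ) + (b : ℕ) + 1) with heps
  -- membership characterization
  have hmem0 : ∀ X : Matrix (Fin n) (Fin n) ℂ, X ∈ V ↔
      (Xᵀ * J + J * X = 0 ∧ D * X - X * D = 0) := by
    intro X
    rw [hV, Submodule.mem_inf, LinearMap.mem_ker, LinearMap.mem_ker]
    constructor
    · rintro ⟨h1, h2⟩
      exact ⟨by simpa using h1, by simpa using h2⟩
    · rintro ⟨h1, h2⟩
      exact ⟨by simpa using h1, by simpa using h2⟩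
  have hrev1 : ∀ (j l : Fin n), ((l : ℕ) + (j : ℕ) = n - 1) ↔ l = Fin.rev j := by
    intro j l
    rw [Fin.ext_iff, Fin.val_rev]
    have h1 := l.isLt
    have h2 := j.isLt
    omega
  have hrev2 : ∀ (i l : Fin n), ((i : ℕ) + (l : ℕ) = n - 1) ↔ l = Fin.rev i := by
    intro i l
    rw [Fin.ext_iff, Fin.val_rev]
    have h1 := l.isLt
    have h2 := i.isLt
    omega
  have hentry : ∀ (X : Matrix (Fin n) (Fin n) ℂ) (i j : Fin n),
      (Xᵀ * J + J * X) i j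
        = X (Fin.rev j) i * (-1 : ℂ) ^ ((Fin.rev j : Fin n) : ℕ)
          + (-1 : ℂ) ^ ((i : ℕ)) * X (Fin.rev i) j := by
    intro X i j
    rw [Matrix.add_apply, Matrix.mul_apply, Matrix.mul_apply]
    have e1 : ∑ l, Xᵀ i l * J l j
        = X (Fin.rev j) i * (-1 : ℂ) ^ ((Fin.rev j : Fin n) : ℕ) := by
      calc ∑ l, Xᵀ i l * J l j
          = ∑ l, (if l = Fin.rev j then X l i * (-1 : ℂ) ^ (l : ℕ) else 0) := by
            apply Finset.sum_congr rfl
            intro l _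
            rw [Matrix.transpose_apply, hJe l j, mul_ite, mul_zero,
              if_congr (hrev1 j l) rfl rfl]
      _ = X (Fin.rev j) i * (-1 : ℂ) ^ ((Fin.rev j : Fin n) : ℕ) := by
            rw [Finset.sum_ite_eq']
            simp
    have e2 : ∑ l, J i l * X l j
        = (-1 : ℂ) ^ ((i : ℕ)) * X (Fin.rev i) j := by
      calc ∑ l, J i l * X l j
          = ∑ l, (if l = Fin.rev i then (-1 : ℂ) ^ (i : ℕ) * X l j else 0) := by
            apply Finset.sum_congr rfl
            intro l _
            rw [hJe i l, ite_mul, zero_mul, if_congr (hrev2 i l) rfl rfl]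
      _ = (-1 : ℂ) ^ ((i : ℕ)) * X (Fin.rev i) j := by
            rw [Finset.sum_ite_eq']
            simp
    rw [e1, e2]
  have hC1iff : ∀ X : Matrix (Fin n) (Fin n) ℂ,
      (Xᵀ * J + J * X = 0) ↔
        (∀ a b : Fin n, X a b = eps a b * X (Fin.rev b) (Fin.rev a)) := by
    intro X
    rw [← Matrix.ext_iff]
    constructor
    · intro h a b
      have h2 := h (Fin.rev a) b
      rw [hentry, Matrix.zero_apply, Fin.rev_rev] at h2
      have h3 := solve1 ((Fin.rev b : Fin n) : ℕ) ((Fin.rev a : Fin n) : ℕ)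
        (X (Fin.rev b) (Fin.rev a)) (X a b) h2
      rw [h3, heps]
      have hpar : (((Fin.rev b : Fin n) : ℕ) + ((Fin.rev a : Fin n) : ℕ) + 1) % 2
          = ((a : ℕ) + (b : ℕ) + 1) % 2 := by
        rw [Fin.val_rev, Fin.val_rev]
        have h4 := a.isLt
        have h5 := b.isLt
        omega
      rw [np_congr hpar]
    · intro h i j
      rw [hentry, Matrix.zero_apply]
      have h2 := h (Fin.rev j) i
      rw [Fin.rev_rev] at h2
      rw [h2, heps]
      exact coefz ((Fin.rev j : Fin n) : ℕ) ((i : ℕ)) (X (Fin.rev i) j)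
  have hd : ∀ i j : Fin n,
      ((ζ ^ ((n : ℤ) - 1 - 2 * (i : ℤ))) = ζ ^ ((n : ℤ) - 1 - 2 * (j : ℤ)))
        ↔ (i : ℕ) % k = (j : ℕ) % k := by
    intro i j
    rw [← div_eq_one_iff_eq (zpow_ne_zero _ hζ0), ← zpow_sub₀ hζ0,
      show ((n : ℤ) - 1 - 2 * (i : ℤ)) - ((n : ℤ) - 1 - 2 * (j : ℤ))
        = 2 * ((j : ℤ) - (i : ℤ)) by ring,
      hζ.zpow_eq_one_iff_dvd,
      show ((2 * k : ℕ) : ℤ) = 2 * (k : ℤ) by push_cast; ring,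
      mul_dvd_mul_iff_left (two_ne_zero (α := ℤ))]
    rw [← Nat.modEq_iff_dvd]
    exact ⟨fun h => h, fun h => h⟩
  have hC2iff : ∀ X : Matrix (Fin n) (Fin n) ℂ,
      (D * X - X * D = 0) ↔
        (∀ a b : Fin n, (a : ℕ) % k ≠ (b : ℕ) % k → X a b = 0) := by
    intro X
    rw [sub_eq_zero, ← Matrix.ext_iff]
    subst hD
    constructor
    · intro h a b hne
      have h1 := h a b
      rw [Matrix.diagonal_mul, Matrix.mul_diagonal] at h1
      have hdne : ζ ^ ((n : ℤ) - 1 - 2 * (a : ℤ)) ≠ ζ ^ ((n : ℤ) - 1 - 2 * (b : ℤ)) :=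
        fun hc => hne ((hd a b).1 hc)
      have h0 : (ζ ^ ((n : ℤ) - 1 - 2 * (a : ℤ)) - ζ ^ ((n : ℤ) - 1 - 2 * (b : ℤ)))
          * X a b = 0 := by
        rw [sub_mul, h1]
        ring
      rcases mul_eq_zero.1 h0 with h' | h'
      · exact absurd (sub_eq_zero.1 h') hdne
      · exact h'
    · intro h a b
      rw [Matrix.diagonal_mul, Matrix.mul_diagonal]
      by_cases hmod : (a : ℕ) % k = (b : ℕ) % k
      · rw [(hd a b).2 hmod]
        ring
      · rw [h a b hmod]
        ring
  have hmemV : ∀ X : Matrix (Fin n) (Fin n) ℂ, X ∈ V ↔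
      ((∀ a b : Fin n, X a b = eps a b * X (Fin.rev b) (Fin.rev a)) ∧
        (∀ a b : Fin n, (a : ℕ) % k ≠ (b : ℕ) % k → X a b = 0)) := by
    intro X
    rw [hmem0, hC1iff, hC2iff]
  clear hmem0 hC1iff hC2iff hentry hd hV
  have hrevmod : ∀ a b : Fin n, (a : ℕ) % k = (b : ℕ) % k →
      ((Fin.rev b : Fin n) : ℕ) % k = ((Fin.rev a : Fin n) : ℕ) % k := by
    intro a b h
    have ha := a.isLt
    have hb := b.isLt
    have h2 : Nat.ModEq k (((Fin.rev b : Fin n) : ℕ) + (b : ℕ))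
        (((Fin.rev a : Fin n) : ℕ) + (a : ℕ)) := by
      rw [Fin.val_rev, Fin.val_rev, show n - ((b : ℕ) + 1) + (b : ℕ) = n - 1 by omega,
        show n - ((a : ℕ) + 1) + (a : ℕ) = n - 1 by omega]
    exact Nat.ModEq.add_right_cancel (Nat.ModEq.symm h) h2
  set S : Finset (Fin n × Fin n) := Finset.univ.filter
    (fun p => (p.1 : ℕ) % k = (p.2 : ℕ) % k ∧ (p.1 : ℕ) + (p.2 : ℕ) ≤ n - 1) with hS
  have hmemS : ∀ a b : Fin n,
      ((a, b) ∈ S ↔ ((a : ℕ) % k = (b : ℕ) % k ∧ (a : ℕ) + (b : ℕ) ≤ n - 1)) := by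
    intro a b; rw [hS]; simp
  have hepssq : ∀ a b : Fin n, eps a b * eps a b = 1 := by
    intro a b
    simp only [heps]
    rw [← pow_add,
      np_congr (show ((a:ℕ)+(b:ℕ)+1+((a:ℕ)+(b:ℕ)+1)) % 2 = 0 % 2 by omega), pow_zero]
  have hepsrev : ∀ a b : Fin n, eps (Fin.rev b) (Fin.rev a) = eps a b := by
    intro a b
    simp only [heps]
    apply np_congr
    rw [Fin.val_rev, Fin.val_rev]
    have := a.isLt
    have := b.isLt
    omega
  have hepsfix : ∀ a b : Fin n, (a:ℕ)+(b:ℕ) = n - 1 → eps a b = 1 := by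
    intro a b h
    simp only [heps]
    rw [np_congr (show ((a:ℕ)+(b:ℕ)+1) % 2 = 0 % 2 by omega), pow_zero]
  let φ : ↥V →ₗ[ℂ] (↥S → ℂ) :=
    { toFun := fun X p => (X : Matrix (Fin n) (Fin n) ℂ) p.1.1 p.1.2
      map_add' := fun X Y => rfl
      map_smul' := fun c X => rfl }
  have hφ : ∀ (X : ↥V) (p : ↥S), φ X p = (X : Matrix (Fin n) (Fin n) ℂ) p.1.1 p.1.2 :=
    fun _ _ => rfl
  have hinj : Function.Injective φ := by
    rw [← LinearMap.ker_eq_bot, LinearMap.ker_eq_bot']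
    intro X hX
    obtain ⟨hc1, hc2⟩ := (hmemV X.1).1 X.2
    have h0 : ∀ p : ↥S, (X : Matrix (Fin n) (Fin n) ℂ) p.1.1 p.1.2 = 0 := by
      intro p
      rw [← hφ X p, hX]
      rfl
    apply Subtype.ext
    show (X : Matrix (Fin n) (Fin n) ℂ) = 0
    ext a b
    show (X : Matrix (Fin n) (Fin n) ℂ) a b = 0
    by_cases hmod : (a : ℕ) % k = (b : ℕ) % k
    · by_cases hsum : (a : ℕ) + (b : ℕ) ≤ n - 1
      · exact h0 ⟨(a, b), (hmemS a b).2 ⟨hmod, hsum⟩⟩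
      · rw [hc1 a b]
        have hmem : (Fin.rev b, Fin.rev a) ∈ S := by
          apply (hmemS _ _).2
          refine ⟨hrevmod a b hmod, ?_⟩
          rw [Fin.val_rev, Fin.val_rev]
          have := a.isLt
          have := b.isLt
          omega
        rw [h0 ⟨(Fin.rev b, Fin.rev a), hmem⟩, mul_zero]
    · exact hc2 a b hmod
  have hsurj : Function.Surjective φ := by
    intro f
    set Y : Matrix (Fin n) (Fin n) ℂ := fun a b =>
      if h : (a, b) ∈ S then f ⟨(a, b), h⟩
      else if h' : (Fin.rev b, Fin.rev a) ∈ S then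
        eps a b * f ⟨(Fin.rev b, Fin.rev a), h'⟩
      else 0 with hYe
    have hYmem : Y ∈ V := by
      rw [hmemV]
      constructor
      · intro a b
        by_cases h1 : (a, b) ∈ S
        · by_cases h2 : (Fin.rev b, Fin.rev a) ∈ S
          · have ha := a.isLt
            have hb := b.isLt
            have e1 := (hmemS a b).1 h1
            have e2 := (hmemS _ _).1 h2
            rw [Fin.val_rev, Fin.val_rev] at e2
            have hab : (a : ℕ) + (b : ℕ) = n - 1 := by omega
            have hfix1 : Fin.rev b = a := by rw [Fin.ext_iff, Fin.val_rev]; omega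
            have hfix2 : Fin.rev a = b := by rw [Fin.ext_iff, Fin.val_rev]; omega
            rw [hfix1, hfix2, hepsfix a b hab, one_mul]
          · have hY1 : Y a b = f ⟨(a, b), h1⟩ := by
              simp only [hYe]
              rw [dif_pos h1]
            have hY2 : Y (Fin.rev b) (Fin.rev a)
                = eps (Fin.rev b) (Fin.rev a) * f ⟨(a, b), h1⟩ := by
              simp only [hYe]
              rw [dif_neg h2]
              simp only [Fin.rev_rev]
              rw [dif_pos h1]
            rw [hY1, hY2, hepsrev, ← mul_assoc, hepssq, one_mul]
        · by_cases h2 : (Fin.rev b, Fin.rev a) ∈ S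
          · have hY1 : Y a b = eps a b * f ⟨(Fin.rev b, Fin.rev a), h2⟩ := by
              simp only [hYe]
              rw [dif_neg h1, dif_pos h2]
            have hY2 : Y (Fin.rev b) (Fin.rev a) = f ⟨(Fin.rev b, Fin.rev a), h2⟩ := by
              simp only [hYe]
              rw [dif_pos h2]
            rw [hY1, hY2]
          · have hY1 : Y a b = 0 := by
              simp only [hYe]
              rw [dif_neg h1, dif_neg h2]
            have hY2 : Y (Fin.rev b) (Fin.rev a) = 0 := by
              simp only [hYe]
              rw [dif_neg h2]
              simp only [Fin.rev_rev]
              rw [dif_neg h1]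
            rw [hY1, hY2, mul_zero]
      · intro a b hmod
        have h1 : (a, b) ∉ S := fun hc => hmod ((hmemS a b).1 hc).1
        have h2 : (Fin.rev b, Fin.rev a) ∉ S := by
          intro hc
          have h3 := hrevmod _ _ (((hmemS _ _).1 hc).1)
          rw [Fin.rev_rev, Fin.rev_rev] at h3
          exact hmod h3
        simp only [hYe]
        rw [dif_neg h1, dif_neg h2]
    refine ⟨⟨Y, hYmem⟩, ?_⟩
    funext p
    obtain ⟨⟨a, b⟩, hp⟩ := p
    show Y a b = f ⟨(a, b), hp⟩
    simp only [hYe]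
    rw [dif_pos hp]
  have hrank : Module.finrank ℂ ↥V = S.card := by
    rw [(LinearEquiv.ofBijective φ ⟨hinj, hsurj⟩).finrank_eq, Module.finrank_pi,
      Fintype.card_coe]
  rw [hrank]
  set A : Finset (Fin n × Fin n) := Finset.univ.filter
    (fun p => (p.1 : ℕ) % k = (p.2 : ℕ) % k) with hA
  set Fx : Finset (Fin n × Fin n) := Finset.univ.filter
    (fun p => (p.1 : ℕ) % k = (p.2 : ℕ) % k ∧ (p.1 : ℕ) + (p.2 : ℕ) = n - 1) with hFx
  have hSA : S ⊆ A := by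
    intro p hp
    rw [hS, Finset.mem_filter] at hp
    rw [hA, Finset.mem_filter]
    exact ⟨hp.1, hp.2.1⟩
  have hFS : Fx ⊆ S := by
    intro p hp
    rw [hFx, Finset.mem_filter] at hp
    rw [hS, Finset.mem_filter]
    exact ⟨hp.1, hp.2.1, le_of_eq hp.2.2⟩
  have hASimg : A \ S = (S \ Fx).image (fun p => (Fin.rev p.2, Fin.rev p.1)) := by
    ext ⟨a, b⟩
    simp only [Finset.mem_sdiff, Finset.mem_image, hA, hS, hFx, Finset.mem_filter,
      Finset.mem_univ, true_and, not_and]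
    constructor
    · rintro ⟨hmod, hns⟩
      have hgt : n - 1 < (a : ℕ) + (b : ℕ) := by
        by_contra hle
        exact absurd (by omega : (a : ℕ) + (b : ℕ) ≤ n - 1) (hns hmod)
      have ha := a.isLt
      have hb := b.isLt
      refine ⟨(Fin.rev b, Fin.rev a), ⟨⟨hrevmod a b hmod, ?_⟩, ?_⟩, ?_⟩
      · rw [Fin.val_rev, Fin.val_rev]
        omega
      · intro _ _
        rw [Fin.val_rev, Fin.val_rev] at *
        omega
      · show (Fin.rev (Fin.rev a), Fin.rev (Fin.rev b)) = (a, b)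
        rw [Fin.rev_rev, Fin.rev_rev]
    · rintro ⟨⟨c, d⟩, ⟨⟨⟨hm, hs⟩, hnf⟩, heq⟩⟩
      dsimp only at hm hs hnf heq
      have hc := c.isLt
      have hd := d.isLt
      have hne : (c : ℕ) + (d : ℕ) < n - 1 := by
        rcases Nat.lt_or_ge ((c : ℕ) + (d : ℕ)) (n - 1) with h | h
        · exact h
        · exact absurd (by omega : (c : ℕ) + (d : ℕ) = n - 1) (hnf hm)
      obtain ⟨rfl, rfl⟩ : Fin.rev d = a ∧ Fin.rev c = b := by
        rw [Prod.ext_iff] at heq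
        exact ⟨heq.1, heq.2⟩
      refine ⟨hrevmod c d hm, ?_⟩
      intro _
      simp only [Fin.val_rev]
      omega
  have himginj : Function.Injective (fun p : Fin n × Fin n => (Fin.rev p.2, Fin.rev p.1)) := by
    rintro ⟨a, b⟩ ⟨c, d⟩ h
    rw [Prod.ext_iff] at h ⊢
    exact ⟨Fin.rev_injective h.2, Fin.rev_injective h.1⟩
  have h1 : (A \ S).card = (S \ Fx).card := by
    rw [hASimg, Finset.card_image_of_injective _ himginj]
  have h2 := Finset.card_sdiff_add_card_eq_card hSA
  have h3 := Finset.card_sdiff_add_card_eq_card hFS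
  have hAcard : A.card = n * q + (q + 1) * r := by
    rw [hA]
    exact cardA n k q r hk0 hdiv hr
  have hFcard : Fx.card = if Odd k then 2 * ((q + 1) / 2) else 0 := by
    rw [hFx]
    exact cardFix n k q r hk0 hdiv hr hn2 hn0
  rw [← hAcard, ← hFcard]
  omega

/-- Let `m ≥ 1`, `k ≥ 1`, write `2m = q * k + r` with `0 ≤ r < k`, and let
`ζ ∈ ℂ` be a primitive `2k`-th root of unity. Let `J` be the `2m × 2m` matrix with
`J i j = (-1)^i` if `i + j = 2m - 1` and `0` otherwise, `sp(J) = {X : Xᵀ J + J X = 0}`, and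
`D` the diagonal matrix with entries `ζ^(2m-1-2i)`. Then
`2 * dim {X ∈ sp(J) : D X = X D} = 2m q + (q+1) r + e`, where `e = 2⌊(q+1)/2⌋` if `k` is odd
and `e = 0` if `k` is even. -/
theorem stmt_13
    (m k q r : ℕ) (hm : 1 ≤ m) (hk : 1 ≤ k) (hdiv : 2 * m = q * k + r) (hr : r < k)
    (ζ : ℂ) (hζ : IsPrimitiveRoot ζ (2 * k))
    (J : Matrix (Fin (2 * m)) (Fin (2 * m)) ℂ)
    (hJ : J = fun i j : Fin (2 * m) =>
      if (i : ℕ) + (j : ℕ) = 2 * m - 1 then (-1 : ℂ) ^ (i : ℕ) else 0)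
    (D : Matrix (Fin (2 * m)) (Fin (2 * m)) ℂ)
    (hD : D = Matrix.diagonal fun i : Fin (2 * m) =>
      ζ ^ ((2 * m : ℤ) - 1 - 2 * (i : ℤ))) :
    2 * Module.finrank ℂ
        ↥(LinearMap.ker
            (LinearMap.mulRight ℂ J ∘ₗ
              (Matrix.transposeLinearEquiv (Fin (2 * m)) (Fin (2 * m)) ℂ ℂ).toLinearMap
              + LinearMap.mulLeft ℂ J)
          ⊓ LinearMap.ker (LinearMap.mulLeft ℂ D - LinearMap.mulRight ℂ D))
      = 2 * m * q + (q + 1) * r + (if Odd k then 2 * ((q + 1) / 2) else 0) := by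
  have hDc : D = Matrix.diagonal fun i : Fin (2 * m) =>
      ζ ^ (((2 * m : ℕ) : ℤ) - 1 - 2 * (i : ℤ)) := by
    rw [hD]
    norm_cast
  exact main_aux (2 * m) k q r (by omega) (by omega) hk hdiv hr ζ hζ J D hJ hDc
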